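/- In a finite switching state-space model, the backward mode-sampling weights satisfy: for 1 ≤ t ≤ T−1, for any mode n ∈ M, given a fixed next-stage mode m ∈ M and state x⁺ ∈ S, P(M_t = n | M_{t+1} = m, X_{t+1} = x⁺, Y_{1:t} = y_{1:t}) is proportional (with proportionality constant independent of n) to μ_t^n · π(n, m) · Σ_{x∈S} q(x⁺ | x, n, m) · P(X_t = x | M_t = n, Y_{1:t} = y_{1:t}), where μ_t^n := P(M_t = n | Y_{1:t} = y_{1:t}), provided the relevant conditioning events have positive probability. -/

import Mathlib

set_option linter.unusedSectionVars false
set_option maxHeartbeats 1000000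


open Finset

namespace SwitchingSSM

noncomputable section

/-- A trajectory of a switching state-space model over `T` steps: modes and hidden states
at times `0, 1, ..., T`, and observations at times `1, ..., T` (the observation at time
`i+1` is component `i`). -/
abbrev Traj (M S Y : Type) (T : ℕ) : Type :=
  (Fin (T + 1) → M) × (Fin (T + 1) → S) × (Fin T → Y)

variable {M S Y : Type} [Fintype M] [Fintype S] [Fintype Y]

/-- Joint probability of a complete trajectory of modes, states and observations:
`ρ(m₀) q₀(x₀ | m₀) ∏ₜ π(m₍ₜ₋₁₎, mₜ) q(xₜ | x₍ₜ₋₁₎, m₍ₜ₋₁₎, mₜ) g(yₜ | xₜ, mₜ)`,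
where `pim n m` is `π(n, m)`, `q0 m x` is `q₀(x | m)`, `q x' n m x` is `q(x | x', n, m)`
and `g x m y` is `g(y | x, m)`. -/
def joint (T : ℕ) (rho : M → ℝ) (pim : M → M → ℝ) (q0 : M → S → ℝ)
    (q : S → M → M → S → ℝ) (g : S → M → Y → ℝ) (ω : Traj M S Y T) : ℝ :=
  rho (ω.1 0) * q0 (ω.1 0) (ω.2.1 0) *
    ∏ i : Fin T,
      pim (ω.1 i.castSucc) (ω.1 i.succ) *
        q (ω.2.1 i.castSucc) (ω.1 i.castSucc) (ω.1 i.succ) (ω.2.1 i.succ) *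
          g (ω.2.1 i.succ) (ω.1 i.succ) (ω.2.2 i)

open Classical in
/-- Probability of an event `A` of trajectories. -/
def Pr (T : ℕ) (rho : M → ℝ) (pim : M → M → ℝ) (q0 : M → S → ℝ)
    (q : S → M → M → S → ℝ) (g : S → M → Y → ℝ) (A : Traj M S Y T → Prop) : ℝ :=
  ∑ ω : Traj M S Y T, if A ω then joint T rho pim q0 q g ω else 0

/-- Conditional probability `P(A | B)`. -/
def cPr (T : ℕ) (rho : M → ℝ) (pim : M → M → ℝ) (q0 : M → S → ℝ)
    (q : S → M → M → S → ℝ) (g : S → M → Y → ℝ) (A B : Traj M S Y T → Prop) : ℝ :=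
  Pr T rho pim q0 q g (fun ω => A ω ∧ B ω) / Pr T rho pim q0 q g B

section Aux

/-! ### Auxiliary machinery -/

def restrict {T : ℕ} (ω : Traj M S Y (T + 1)) : Traj M S Y T :=
  ⟨fun i => ω.1 i.castSucc, fun i => ω.2.1 i.castSucc, fun i => ω.2.2 i.castSucc⟩

def resMany : (k : ℕ) → {T : ℕ} → Traj M S Y (T + k) → Traj M S Y T
  | 0, _, ω => ω
  | k+1, _, ω => resMany k (restrict ω)

lemma resMany_fst (k : ℕ) {T : ℕ} (ω : Traj M S Y (T + k)) (j : Fin (T + 1)) :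
    (resMany k ω).1 j = ω.1 ⟨j.1, by omega⟩ := by
  induction k with
  | zero => exact congrArg ω.1 (Fin.ext rfl)
  | succ k ih =>
      show (resMany k (restrict ω)).1 j = _
      rw [ih]
      exact congrArg ω.1 (Fin.ext rfl)

lemma resMany_x (k : ℕ) {T : ℕ} (ω : Traj M S Y (T + k)) (j : Fin (T + 1)) :
    (resMany k ω).2.1 j = ω.2.1 ⟨j.1, by omega⟩ := by
  induction k with
  | zero => exact congrArg ω.2.1 (Fin.ext rfl)
  | succ k ih =>
      show (resMany k (restrict ω)).2.1 j = _
      rw [ih]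
      exact congrArg ω.2.1 (Fin.ext rfl)

lemma resMany_obs (k : ℕ) {T : ℕ} (ω : Traj M S Y (T + k)) (j : Fin T) :
    (resMany k ω).2.2 j = ω.2.2 ⟨j.1, by omega⟩ := by
  induction k with
  | zero => exact congrArg ω.2.2 (Fin.ext rfl)
  | succ k ih =>
      show (resMany k (restrict ω)).2.2 j = _
      rw [ih]
      exact congrArg ω.2.2 (Fin.ext rfl)

def extEquiv (T : ℕ) : (Traj M S Y T × (M × S × Y)) ≃ Traj M S Y (T + 1) where
  toFun p := ⟨Fin.snoc p.1.1 p.2.1, Fin.snoc p.1.2.1 p.2.2.1, Fin.snoc p.1.2.2 p.2.2.2⟩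
  invFun ω := ⟨⟨Fin.init ω.1, Fin.init ω.2.1, Fin.init ω.2.2⟩,
               ⟨ω.1 (Fin.last _), ω.2.1 (Fin.last _), ω.2.2 (Fin.last _)⟩⟩
  left_inv := by
    rintro ⟨⟨mv, xv, yv⟩, ⟨a, s, y⟩⟩
    simp [Fin.init_snoc, Fin.snoc_last]
  right_inv := by
    rintro ⟨mv, xv, yv⟩
    simp [Fin.snoc_init_self]

variable (rho : M → ℝ) (pim : M → M → ℝ) (q0 : M → S → ℝ)
    (q : S → M → M → S → ℝ) (g : S → M → Y → ℝ)

lemma joint_ext (T : ℕ) (ω : Traj M S Y T) (a : M) (s : S) (y : Y) :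
    joint (T + 1) rho pim q0 q g
        ⟨Fin.snoc ω.1 a, Fin.snoc ω.2.1 s, Fin.snoc ω.2.2 y⟩ =
      joint T rho pim q0 q g ω *
        (pim (ω.1 (Fin.last T)) a * q (ω.2.1 (Fin.last T)) (ω.1 (Fin.last T)) a s *
          g s a y) := by
  have h0m : (Fin.snoc ω.1 a : Fin (T + 2) → M) 0 = ω.1 0 := by
    rw [← Fin.castSucc_zero, Fin.snoc_castSucc]
  have h0x : (Fin.snoc ω.2.1 s : Fin (T + 2) → S) 0 = ω.2.1 0 := by
    rw [← Fin.castSucc_zero, Fin.snoc_castSucc]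
  unfold joint
  rw [Fin.prod_univ_castSucc]
  simp only [h0m, h0x, Fin.succ_castSucc, Fin.snoc_castSucc, Fin.snoc_last, Fin.succ_last]
  ring

open Classical in
lemma sum_ext_eq (T : ℕ)
    (hpim1 : ∀ a : M, (∑ b : M, pim a b) = 1)
    (hq1 : ∀ (x' : S) (a b : M), (∑ x : S, q x' a b x) = 1)
    (hg1 : ∀ (x : S) (a : M), (∑ y : Y, g x a y) = 1)
    (ω : Traj M S Y T) :
    (∑ z : M × S × Y, joint (T + 1) rho pim q0 q g (extEquiv T (ω, z))) =
      joint T rho pim q0 q g ω := by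
  simp only [extEquiv, Equiv.coe_fn_mk]
  rw [Fintype.sum_prod_type]
  simp only [Fintype.sum_prod_type]
  simp only [joint_ext, ← mul_assoc]
  simp only [← Finset.mul_sum, hg1, hq1, hpim1, mul_one]

open Classical in
lemma Pr_comp_restrict (T : ℕ)
    (hpim1 : ∀ a : M, (∑ b : M, pim a b) = 1)
    (hq1 : ∀ (x' : S) (a b : M), (∑ x : S, q x' a b x) = 1)
    (hg1 : ∀ (x : S) (a : M), (∑ y : Y, g x a y) = 1)
    (A : Traj M S Y T → Prop) :
    Pr (T + 1) rho pim q0 q g (fun ω => A (restrict ω)) = Pr T rho pim q0 q g A := by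
  unfold Pr
  rw [← Equiv.sum_comp (extEquiv T)]
  rw [Fintype.sum_prod_type]
  have hres : ∀ (ω : Traj M S Y T) (z : M × S × Y),
      restrict (extEquiv T (ω, z)) = ω := by
    rintro ⟨mv, xv, yv⟩ ⟨a, s, y⟩
    simp only [extEquiv, Equiv.coe_fn_mk, restrict, Fin.snoc_castSucc]
  refine Finset.sum_congr rfl fun ω _ => ?_
  simp only [hres]
  by_cases h : A ω
  · simp only [h, if_true]
    exact sum_ext_eq rho pim q0 q g T hpim1 hq1 hg1 ω
  · simp [h]

open Classical in
lemma Pr_comp_resMany (k : ℕ) (T : ℕ)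
    (hpim1 : ∀ a : M, (∑ b : M, pim a b) = 1)
    (hq1 : ∀ (x' : S) (a b : M), (∑ x : S, q x' a b x) = 1)
    (hg1 : ∀ (x : S) (a : M), (∑ y : Y, g x a y) = 1)
    (A : Traj M S Y T → Prop) :
    Pr (T + k) rho pim q0 q g (fun ω => A (resMany k ω)) = Pr T rho pim q0 q g A := by
  induction k with
  | zero => rfl
  | succ k ih =>
      have h2 := Pr_comp_restrict rho pim q0 q g (T + k) hpim1 hq1 hg1
        (fun ω' => A (resMany k ω'))
      exact h2.trans ih

open Classical in
lemma Pr_ext (u : ℕ)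
    (hpim1 : ∀ a : M, (∑ b : M, pim a b) = 1)
    (hq1 : ∀ (x' : S) (a b : M), (∑ x : S, q x' a b x) = 1)
    (hg1 : ∀ (x : S) (a : M), (∑ y : Y, g x a y) = 1)
    (A : Traj M S Y (u + 1) → Prop) (B : Traj M S Y u → Prop)
    (h : ∀ (ω : Traj M S Y u) (z : M × S × Y), A (extEquiv u (ω, z)) ↔ B ω) :
    Pr (u + 1) rho pim q0 q g A =
      ∑ ω : Traj M S Y u, if B ω then joint u rho pim q0 q g ω else 0 := by
  unfold Pr
  rw [← Equiv.sum_comp (extEquiv u), Fintype.sum_prod_type]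
  refine Finset.sum_congr rfl fun ω _ => ?_
  by_cases hb : B ω
  · rw [if_pos hb]
    calc (∑ z : M × S × Y, if A (extEquiv u (ω, z)) then
            joint (u + 1) rho pim q0 q g (extEquiv u (ω, z)) else 0)
        = ∑ z : M × S × Y, joint (u + 1) rho pim q0 q g (extEquiv u (ω, z)) :=
          Finset.sum_congr rfl fun z _ => if_pos ((h ω z).mpr hb)
      _ = joint u rho pim q0 q g ω := sum_ext_eq rho pim q0 q g u hpim1 hq1 hg1 ω
  · rw [if_neg hb]
    refine Finset.sum_eq_zero fun z _ => ?_
    rw [if_neg fun ha => hb ((h ω z).mp ha)]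

open Classical in
lemma Pr_base (u : ℕ)
    (hpim1 : ∀ a : M, (∑ b : M, pim a b) = 1)
    (hq1 : ∀ (x' : S) (a b : M), (∑ x : S, q x' a b x) = 1)
    (hg1 : ∀ (x : S) (a : M), (∑ y : Y, g x a y) = 1)
    (n mm : M) (xp : S) (W : (Fin u → Y) → Prop) :
    Pr (u + 1) rho pim q0 q g
        (fun ω => ω.1 (Fin.castSucc (Fin.last u)) = n ∧ ω.1 (Fin.last (u + 1)) = mm ∧
          ω.2.1 (Fin.last (u + 1)) = xp ∧ W (fun i => ω.2.2 i.castSucc)) =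
      pim n mm * ∑ x : S, q x n mm xp *
        Pr (u + 1) rho pim q0 q g
          (fun ω => ω.2.1 (Fin.castSucc (Fin.last u)) = x ∧
            ω.1 (Fin.castSucc (Fin.last u)) = n ∧ W (fun i => ω.2.2 i.castSucc)) := by
  classical
  have L : Pr (u + 1) rho pim q0 q g
      (fun ω => ω.1 (Fin.castSucc (Fin.last u)) = n ∧ ω.1 (Fin.last (u + 1)) = mm ∧
        ω.2.1 (Fin.last (u + 1)) = xp ∧ W (fun i => ω.2.2 i.castSucc)) =
      ∑ ω : Traj M S Y u,
        if ω.1 (Fin.last u) = n ∧ W ω.2.2 then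
          joint u rho pim q0 q g ω * (pim n mm * q (ω.2.1 (Fin.last u)) n mm xp)
        else 0 := by
    unfold Pr
    rw [← Equiv.sum_comp (extEquiv u), Fintype.sum_prod_type]
    refine Finset.sum_congr rfl fun ω _ => ?_
    simp only [Fintype.sum_prod_type]
    simp only [extEquiv, Equiv.coe_fn_mk, joint_ext, Fin.snoc_castSucc, Fin.snoc_last]
    by_cases h1 : ω.1 (Fin.last u) = n
    · by_cases h4 : W ω.2.2
      · simp only [h1, h4, eq_self_iff_true, true_and, and_true, if_true]
        refine (Finset.sum_eq_single_of_mem mm (Finset.mem_univ mm) ?_).trans ?_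
        · intro b _ hb
          refine Finset.sum_eq_zero fun s _ => Finset.sum_eq_zero fun y _ => ?_
          exact if_neg fun hc => hb hc.1
        · refine (Finset.sum_eq_single_of_mem xp (Finset.mem_univ xp) ?_).trans ?_
          · intro s _ hs
            refine Finset.sum_eq_zero fun y _ => ?_
            exact if_neg fun hc => hs hc.2
          · have : ∀ y : Y, (if mm = mm ∧ xp = xp then
                joint u rho pim q0 q g ω *
                  (pim n mm * q (ω.2.1 (Fin.last u)) n mm xp * g xp mm y) else 0) =
                joint u rho pim q0 q g ω *
                  (pim n mm * q (ω.2.1 (Fin.last u)) n mm xp) * g xp mm y := by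
              intro y
              rw [if_pos ⟨rfl, rfl⟩]
              ring
            rw [Finset.sum_congr rfl fun y _ => this y, ← Finset.mul_sum, hg1, mul_one]
      · simp [h4]
    · simp [h1]
  have hiff : ∀ (x : S) (ω : Traj M S Y u) (z : M × S × Y),
      ((extEquiv u (ω, z)).2.1 (Fin.castSucc (Fin.last u)) = x ∧
        (extEquiv u (ω, z)).1 (Fin.castSucc (Fin.last u)) = n ∧
        W (fun i => (extEquiv u (ω, z)).2.2 i.castSucc)) ↔
      (ω.2.1 (Fin.last u) = x ∧ ω.1 (Fin.last u) = n ∧ W ω.2.2) := by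
    rintro x ω ⟨a, s, y⟩
    simp [extEquiv, Fin.snoc_castSucc]
  have hE := fun x : S => Pr_ext rho pim q0 q g u hpim1 hq1 hg1
    (fun ω => ω.2.1 (Fin.castSucc (Fin.last u)) = x ∧
      ω.1 (Fin.castSucc (Fin.last u)) = n ∧ W (fun i => ω.2.2 i.castSucc))
    (fun ω => ω.2.1 (Fin.last u) = x ∧ ω.1 (Fin.last u) = n ∧ W ω.2.2)
    (hiff x)
  have R : (pim n mm * ∑ x : S, q x n mm xp *
      Pr (u + 1) rho pim q0 q g
        (fun ω => ω.2.1 (Fin.castSucc (Fin.last u)) = x ∧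
          ω.1 (Fin.castSucc (Fin.last u)) = n ∧ W (fun i => ω.2.2 i.castSucc))) =
      ∑ ω : Traj M S Y u,
        if ω.1 (Fin.last u) = n ∧ W ω.2.2 then
          joint u rho pim q0 q g ω * (pim n mm * q (ω.2.1 (Fin.last u)) n mm xp)
        else 0 := by
    simp only [hE]
    rw [Finset.mul_sum]
    simp only [Finset.mul_sum]
    rw [Finset.sum_comm]
    refine Finset.sum_congr rfl fun ω _ => ?_
    by_cases hc : ω.1 (Fin.last u) = n ∧ W ω.2.2
    · rw [if_pos hc]
      refine (Finset.sum_eq_single_of_mem (ω.2.1 (Fin.last u)) (Finset.mem_univ _) ?_).trans ?_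
      · intro x _ hx
        rw [if_neg fun hcc => hx hcc.1.symm, mul_zero, mul_zero]
      · rw [if_pos ⟨rfl, hc⟩]
        ring
    · rw [if_neg hc]
      refine Finset.sum_eq_zero fun x _ => ?_
      rw [if_neg fun hcc => hc ⟨hcc.2.1, hcc.2.2⟩, mul_zero, mul_zero]
  exact L.trans R.symm

lemma joint_nonneg (hrho0 : ∀ a, 0 ≤ rho a) (hpim0 : ∀ a b, 0 ≤ pim a b)
    (hq00 : ∀ a x, 0 ≤ q0 a x) (hq0 : ∀ x' a b x, 0 ≤ q x' a b x)
    (hg0 : ∀ x a y, 0 ≤ g x a y) (T : ℕ) (ω : Traj M S Y T) :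
    0 ≤ joint T rho pim q0 q g ω := by
  refine mul_nonneg (mul_nonneg (hrho0 _) (hq00 _ _)) (Finset.prod_nonneg fun i _ => ?_)
  exact mul_nonneg (mul_nonneg (hpim0 _ _) (hq0 _ _ _ _)) (hg0 _ _ _)

open Classical in
lemma Pr_mono (T : ℕ) (A B : Traj M S Y T → Prop)
    (hj : ∀ ω : Traj M S Y T, 0 ≤ joint T rho pim q0 q g ω)
    (hAB : ∀ ω, A ω → B ω) :
    Pr T rho pim q0 q g A ≤ Pr T rho pim q0 q g B := by
  unfold Pr
  refine Finset.sum_le_sum fun ω _ => ?_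
  by_cases h : A ω
  · rw [if_pos h, if_pos (hAB ω h)]
  · rw [if_neg h]
    split
    · exact hj ω
    · exact le_refl 0


end Aux

/-- Backward mode-sampling weights of a finite switching state-space model: for a fixed
next-stage mode `m` and state `x⁺`, there is a constant `c > 0` independent of `n` with
`P(Mₜ = n | M₍ₜ₊₁₎ = m, X₍ₜ₊₁₎ = x⁺, Y_{1:t} = y_{1:t})
  = c ⬝ μₜⁿ π(n, m) ∑ₓ q(x⁺ | x, n, m) P(Xₜ = x | Mₜ = n, Y_{1:t} = y_{1:t})`,
where `μₜⁿ = P(Mₜ = n | Y_{1:t} = y_{1:t})`, provided the relevant conditioning events have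
positive probability.  Here `yobs i` denotes the observation `y_{i+1}`. -/
theorem backward_mode_sampling_weights
    (T : ℕ) (rho : M → ℝ) (pim : M → M → ℝ) (q0 : M → S → ℝ)
    (q : S → M → M → S → ℝ) (g : S → M → Y → ℝ)
    (hrho0 : ∀ a, 0 ≤ rho a) (hrho1 : (∑ a : M, rho a) = 1)
    (hpim0 : ∀ a b, 0 ≤ pim a b) (hpim1 : ∀ a : M, (∑ b : M, pim a b) = 1)
    (hq00 : ∀ a x, 0 ≤ q0 a x) (hq01 : ∀ a : M, (∑ x : S, q0 a x) = 1)
    (hq0 : ∀ x' a b x, 0 ≤ q x' a b x) (hq1 : ∀ (x' : S) (a b : M), (∑ x : S, q x' a b x) = 1)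
    (hg0 : ∀ x a y, 0 ≤ g x a y) (hg1 : ∀ (x : S) (a : M), (∑ y : Y, g x a y) = 1)
    (yobs : Fin T → Y) (t : ℕ) (ht1 : 1 ≤ t) (ht2 : t ≤ T - 1)
    (m : M) (xplus : S)
    (hpos : 0 < Pr T rho pim q0 q g
      (fun ω => ω.1 ⟨t + 1, by omega⟩ = m ∧ ω.2.1 ⟨t + 1, by omega⟩ = xplus ∧
        ∀ i : Fin T, (i : ℕ) < t → ω.2.2 i = yobs i))
    (hpos' : ∀ n : M, 0 < Pr T rho pim q0 q g
      (fun ω => ω.1 ⟨t, by omega⟩ = n ∧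
        ∀ i : Fin T, (i : ℕ) < t → ω.2.2 i = yobs i)) :
    ∃ c : ℝ, 0 < c ∧ ∀ n : M,
      cPr T rho pim q0 q g (fun ω => ω.1 ⟨t, by omega⟩ = n)
          (fun ω => ω.1 ⟨t + 1, by omega⟩ = m ∧ ω.2.1 ⟨t + 1, by omega⟩ = xplus ∧
            ∀ i : Fin T, (i : ℕ) < t → ω.2.2 i = yobs i) =
        c *
          (cPr T rho pim q0 q g (fun ω => ω.1 ⟨t, by omega⟩ = n)
              (fun ω => ∀ i : Fin T, (i : ℕ) < t → ω.2.2 i = yobs i) *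
            pim n m *
            ∑ x : S, q x n m xplus *
              cPr T rho pim q0 q g (fun ω => ω.2.1 ⟨t, by omega⟩ = x)
                (fun ω => ω.1 ⟨t, by omega⟩ = n ∧
                  ∀ i : Fin T, (i : ℕ) < t → ω.2.2 i = yobs i)) := by
  classical
  obtain ⟨k, rfl⟩ : ∃ k, T = t + 1 + k := ⟨T - (t + 1), by omega⟩
  have hjn : ∀ ω : Traj M S Y (t + 1 + k), 0 ≤ joint (t + 1 + k) rho pim q0 q g ω :=
    joint_nonneg rho pim q0 q g hrho0 hpim0 hq00 hq0 hg0 (t + 1 + k)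
  have hDpos : 0 < Pr (t + 1 + k) rho pim q0 q g
      (fun ω => ∀ i : Fin (t + 1 + k), (i : ℕ) < t → ω.2.2 i = yobs i) :=
    lt_of_lt_of_le hpos (Pr_mono rho pim q0 q g _ _ _ hjn fun ω h => h.2.2)
  refine ⟨Pr (t + 1 + k) rho pim q0 q g
      (fun ω => ∀ i : Fin (t + 1 + k), (i : ℕ) < t → ω.2.2 i = yobs i) /
    Pr (t + 1 + k) rho pim q0 q g
      (fun ω => ω.1 ⟨t + 1, by omega⟩ = m ∧ ω.2.1 ⟨t + 1, by omega⟩ = xplus ∧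
        ∀ i : Fin (t + 1 + k), (i : ℕ) < t → ω.2.2 i = yobs i),
    div_pos hDpos hpos, fun n => ?_⟩
  -- coordinate transport facts
  have e1 : ∀ ω : Traj M S Y (t + 1 + k),
      (resMany k ω).1 (Fin.castSucc (Fin.last t)) = ω.1 ⟨t, by omega⟩ :=
    fun ω => resMany_fst k ω (Fin.castSucc (Fin.last t))
  have e2 : ∀ ω : Traj M S Y (t + 1 + k),
      (resMany k ω).1 (Fin.last (t + 1)) = ω.1 ⟨t + 1, by omega⟩ :=
    fun ω => resMany_fst k ω (Fin.last (t + 1))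
  have e3 : ∀ ω : Traj M S Y (t + 1 + k),
      (resMany k ω).2.1 (Fin.last (t + 1)) = ω.2.1 ⟨t + 1, by omega⟩ :=
    fun ω => resMany_x k ω (Fin.last (t + 1))
  have e3' : ∀ ω : Traj M S Y (t + 1 + k),
      (resMany k ω).2.1 (Fin.castSucc (Fin.last t)) = ω.2.1 ⟨t, by omega⟩ :=
    fun ω => resMany_x k ω (Fin.castSucc (Fin.last t))
  have e4 : ∀ (ω : Traj M S Y (t + 1 + k)) (i : Fin t),
      (resMany k ω).2.2 (Fin.castSucc i) = ω.2.2 ⟨i.1, by omega⟩ :=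
    fun ω i => resMany_obs k ω (Fin.castSucc i)
  have hWiff : ∀ ω : Traj M S Y (t + 1 + k),
      (∀ i : Fin t, (resMany k ω).2.2 (Fin.castSucc i) = yobs ⟨i.1, by omega⟩) ↔
      (∀ i : Fin (t + 1 + k), (i : ℕ) < t → ω.2.2 i = yobs i) := by
    intro ω
    constructor
    · intro h i hi
      have := (e4 ω ⟨i.1, hi⟩).symm.trans (h ⟨i.1, hi⟩)
      exact this
    · intro h i
      exact (e4 ω i).trans (h ⟨i.1, by omega⟩ i.2)
  -- marginalization of the joint event
  have hAeq : Pr (t + 1 + k) rho pim q0 q g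
      (fun ω => ω.1 ⟨t, by omega⟩ = n ∧ (ω.1 ⟨t + 1, by omega⟩ = m ∧
        ω.2.1 ⟨t + 1, by omega⟩ = xplus ∧
        ∀ i : Fin (t + 1 + k), (i : ℕ) < t → ω.2.2 i = yobs i)) =
      Pr (t + 1) rho pim q0 q g
      (fun ω => ω.1 (Fin.castSucc (Fin.last t)) = n ∧ ω.1 (Fin.last (t + 1)) = m ∧
        ω.2.1 (Fin.last (t + 1)) = xplus ∧
        (fun gv => ∀ i : Fin t, gv i = yobs ⟨i.1, by omega⟩) (fun i => ω.2.2 i.castSucc)) := by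
    rw [← Pr_comp_resMany rho pim q0 q g k (t + 1) hpim1 hq1 hg1]
    congr 1
    funext ω
    apply propext
    constructor
    · rintro ⟨h1, h2, h3, h4⟩
      exact ⟨(e1 ω).trans h1, (e2 ω).trans h2, (e3 ω).trans h3,
        fun i => (hWiff ω).mpr h4 i⟩
    · rintro ⟨h1, h2, h3, h4⟩
      exact ⟨(e1 ω).symm.trans h1, (e2 ω).symm.trans h2, (e3 ω).symm.trans h3,
        (hWiff ω).mp h4⟩
  have hEeq : ∀ x : S, Pr (t + 1 + k) rho pim q0 q g
      (fun ω => ω.2.1 ⟨t, by omega⟩ = x ∧ (ω.1 ⟨t, by omega⟩ = n ∧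
        ∀ i : Fin (t + 1 + k), (i : ℕ) < t → ω.2.2 i = yobs i)) =
      Pr (t + 1) rho pim q0 q g
      (fun ω => ω.2.1 (Fin.castSucc (Fin.last t)) = x ∧
        ω.1 (Fin.castSucc (Fin.last t)) = n ∧
        (fun gv => ∀ i : Fin t, gv i = yobs ⟨i.1, by omega⟩) (fun i => ω.2.2 i.castSucc)) := by
    intro x
    rw [← Pr_comp_resMany rho pim q0 q g k (t + 1) hpim1 hq1 hg1]
    congr 1
    funext ω
    apply propext
    constructor
    · rintro ⟨h1, h2, h3⟩
      exact ⟨(e3' ω).trans h1, (e1 ω).trans h2, fun i => (hWiff ω).mpr h3 i⟩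
    · rintro ⟨h1, h2, h3⟩
      exact ⟨(e3' ω).symm.trans h1, (e1 ω).symm.trans h2, (hWiff ω).mp h3⟩
  have hbase := Pr_base rho pim q0 q g t hpim1 hq1 hg1 n m xplus
    (fun gv => ∀ i : Fin t, gv i = yobs ⟨i.1, by omega⟩)
  have key : Pr (t + 1 + k) rho pim q0 q g
      (fun ω => ω.1 ⟨t, by omega⟩ = n ∧ (ω.1 ⟨t + 1, by omega⟩ = m ∧
        ω.2.1 ⟨t + 1, by omega⟩ = xplus ∧
        ∀ i : Fin (t + 1 + k), (i : ℕ) < t → ω.2.2 i = yobs i)) =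
      pim n m * ∑ x : S, q x n m xplus * Pr (t + 1 + k) rho pim q0 q g
        (fun ω => ω.2.1 ⟨t, by omega⟩ = x ∧ (ω.1 ⟨t, by omega⟩ = n ∧
          ∀ i : Fin (t + 1 + k), (i : ℕ) < t → ω.2.2 i = yobs i)) := by
    rw [hAeq]
    refine hbase.trans ?_
    congr 1
    exact Finset.sum_congr rfl fun x _ => by rw [hEeq x]
  have alg : ∀ (A B C D : ℝ) (E : S → ℝ), 0 < B → 0 < C → 0 < D →
      A = pim n m * ∑ x : S, q x n m xplus * E x →
      A / B = D / B * (C / D * pim n m * ∑ x : S, q x n m xplus * (E x / C)) := by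
    intro A B C D E hB hC hD hA
    have h : (∑ x : S, q x n m xplus * (E x / C)) = (∑ x : S, q x n m xplus * E x) / C := by
      rw [Finset.sum_div]
      exact Finset.sum_congr rfl fun x _ => (mul_div_assoc _ _ _).symm
    rw [h, hA]
    field_simp
  unfold cPr
  exact alg _ _ _ _ _ hpos (hpos' n) hDpos key


end
end SwitchingSSM
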